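/- Let Δ be a geometric simplicial complex and ω a linear differential such that (Δ,ω) is weakly toric k-chordal for some k ≥ 0. Then for every stress γ ∈ S_{k+1}(Δ), the vertex set of the support of ωγ equals the vertex set of the support of γ, i.e. (ωγ)^(0) = γ^(0). In particular, the map ω : S_{k+1}(Δ) → S_{k}(Δ) is injective. -/

import Mathlib

open MvPolynomial

open MvPolynomial

/-- An abstract simplicial complex on the vertex set `Fin n`:
a collection of finite subsets closed under taking subsets. -/
def IsComplex {n : ℕ} (Δ : Set (Finset (Fin n))) : Prop :=
  ∀ σ ∈ Δ, ∀ τ ⊆ σ, τ ∈ Δ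

/-- The vertex set `Δ^(0)` of a simplicial complex. -/
def verts {n : ℕ} (Δ : Set (Finset (Fin n))) : Set (Fin n) := {v | {v} ∈ Δ}

/-- The partial derivative `∂/∂xᵢ` as a linear endomorphism of `ℝ[x₁,…,xₙ]`. -/
noncomputable def pd {n : ℕ} (i : Fin n) : Module.End ℝ (MvPolynomial (Fin n) ℝ) :=
  (pderiv i).toLinearMap

/-- The constant coefficient differential operator `(x^a)^∨ = ∏ᵢ (∂/∂xᵢ)^(aᵢ)`. -/
noncomputable def monDiff {n : ℕ} (a : Fin n →₀ ℕ) : Module.End ℝ (MvPolynomial (Fin n) ℝ) :=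
  ((List.finRange n).map fun i => pd i ^ a i).prod

/-- The stress space `S̃(Δ)`: polynomials annihilated by `q^∨` for every `q` in the
nonface ideal `I_Δ` (equivalently, by `(x^a)^∨` for every monomial generator `x^a` of `I_Δ`). -/
noncomputable def tStress {n : ℕ} (Δ : Set (Finset (Fin n))) :
    Submodule ℝ (MvPolynomial (Fin n) ℝ) :=
  ⨅ a ∈ {a : Fin n →₀ ℕ | a.support ∉ Δ}, LinearMap.ker (monDiff a)

/-- A linear differential `Σᵢ cᵢ ∂/∂xᵢ`. -/
noncomputable def linDiff {n : ℕ} (c : Fin n → ℝ) : Module.End ℝ (MvPolynomial (Fin n) ℝ) :=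
  ∑ i, c i • pd i

/-- The canonical differential `δ = Σᵢ ∂/∂xᵢ`. -/
noncomputable def canDiff (n : ℕ) : Module.End ℝ (MvPolynomial (Fin n) ℝ) :=
  linDiff fun _ => (1 : ℝ)

/-- The coordinate differential `θⱼ = Σᵢ (vᵢ)ⱼ ∂/∂xᵢ` of a geometric simplicial complex. -/
noncomputable def coordDiff {n d : ℕ} (V : Fin n → Fin d → ℝ) (j : Fin d) :
    Module.End ℝ (MvPolynomial (Fin n) ℝ) :=
  linDiff fun i => V i j

/-- The stress space `S(Δ)` of a geometric simplicial complex with vertex coordinates `V`. -/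
noncomputable def stress {n d : ℕ} (V : Fin n → Fin d → ℝ) (Δ : Set (Finset (Fin n))) :
    Submodule ℝ (MvPolynomial (Fin n) ℝ) :=
  tStress Δ ⊓ ⨅ j : Fin d, LinearMap.ker (coordDiff V j)

/-- The degree-`k` graded piece `S_k(Δ)` of the stress space. -/
noncomputable def stressK {n d : ℕ} (V : Fin n → Fin d → ℝ) (Δ : Set (Finset (Fin n)))
    (k : ℕ) : Submodule ℝ (MvPolynomial (Fin n) ℝ) :=
  stress V Δ ⊓ homogeneousSubmodule (Fin n) ℝ k

/-- A geometric simplicial complex in `ℝ^d` is proper if the coordinates of each face of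
dimension `< d` are linearly independent. -/
def IsProper {n d : ℕ} (V : Fin n → Fin d → ℝ) (Δ : Set (Finset (Fin n))) : Prop :=
  ∀ σ ∈ Δ, σ.card ≤ d → LinearIndependent ℝ (fun i : {x // x ∈ σ} => V i.1)

/-- The star of a face. -/
def cStar {n : ℕ} (Δ : Set (Finset (Fin n))) (σ : Finset (Fin n)) : Set (Finset (Fin n)) :=
  {τ ∈ Δ | σ ∪ τ ∈ Δ}

/-- The star of a vertex. -/
def vStar {n : ℕ} (Δ : Set (Finset (Fin n))) (v : Fin n) : Set (Finset (Fin n)) :=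
  cStar Δ {v}

/-- The boundary `∂St_v Δ` of the star of a vertex: faces of the star not containing `v`. -/
def vStarBd {n : ℕ} (Δ : Set (Finset (Fin n))) (v : Fin n) : Set (Finset (Fin n)) :=
  {τ ∈ vStar Δ v | v ∉ τ}

/-- The link of a face. -/
def lk {n : ℕ} (Δ : Set (Finset (Fin n))) (σ : Finset (Fin n)) : Set (Finset (Fin n)) :=
  {τ | Disjoint σ τ ∧ σ ∪ τ ∈ Δ}

/-- The vertex set `γ^(0)` of the support of a stress `γ`. -/
noncomputable def stressVerts {n : ℕ} (γ : MvPolynomial (Fin n) ℝ) : Finset (Fin n) :=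
  γ.support.biUnion fun a => a.support

/-- `g_k = dim S_k − dim S_{k−1}` (with `S_{−1} = 0`). -/
noncomputable def gnum {n d : ℕ} (V : Fin n → Fin d → ℝ) (Δ : Set (Finset (Fin n)))
    (k : ℕ) : ℤ :=
  (Module.finrank ℝ ↥(stressK V Δ k) : ℤ) -
    if k = 0 then 0 else (Module.finrank ℝ ↥(stressK V Δ (k - 1)) : ℤ)

/-- The homogenizing embedding `ℝ^d → ℝ^d × {1} ⊆ ℝ^{d+1}` applied to vertex coordinates. -/
noncomputable def homV {n d : ℕ} (p : Fin n → Fin d → ℝ) : Fin n → Fin (d + 1) → ℝ :=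
  fun i => Fin.snoc (p i) 1

/-- `Δ` is the boundary complex of the simplicial `d`-polytope `conv{p 1, …, p n}`:
the polytope is full-dimensional, every `p i` is a vertex, the faces of `Δ` are exactly the
vertex sets cut out by supporting hyperplanes, and every proper face is a simplex. -/
def IsSimplicialPolytopeBoundary {n d : ℕ} (p : Fin n → Fin d → ℝ)
    (Δ : Set (Finset (Fin n))) : Prop :=
  affineSpan ℝ (Set.range p) = ⊤ ∧
  (∀ i, p i ∉ convexHull ℝ (p '' {j | j ≠ i})) ∧
  (∀ σ ∈ Δ, AffineIndependent ℝ (fun i : {x // x ∈ σ} => p i.1)) ∧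
  (∀ σ : Finset (Fin n), σ ∈ Δ ↔
    ∃ (f : (Fin d → ℝ) →ₗ[ℝ] ℝ) (c : ℝ),
      (∃ i, f (p i) < c) ∧ (∀ i, f (p i) ≤ c) ∧ (∀ i, f (p i) = c ↔ i ∈ σ))

/-- The simplicial boundary operator (with real coefficients), on the free module spanned by
all finite subsets of `Fin n`; the empty set plays the role of the `(−1)`-face, so that the
associated homology is reduced. -/
noncomputable def bdry {n : ℕ} : (Finset (Fin n) →₀ ℝ) →ₗ[ℝ] (Finset (Fin n) →₀ ℝ) :=
  Finsupp.lsum ℝ fun σ => LinearMap.toSpanSingleton ℝ _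
    (∑ i ∈ σ, ((-1 : ℝ) ^ (σ.filter (· < i)).card) • Finsupp.single (σ.erase i) (1 : ℝ))

/-- The space of simplicial `k`-chains of `Δ` (spanned by faces of `Δ` of dimension `k`). -/
noncomputable def chains {n : ℕ} (Δ : Set (Finset (Fin n))) (k : ℤ) :
    Submodule ℝ (Finset (Fin n) →₀ ℝ) :=
  Finsupp.supported ℝ ℝ {σ | σ ∈ Δ ∧ (σ.card : ℤ) = k + 1}

/-- Reduced simplicial `k`-cycles of `Δ`. -/
noncomputable def cycles {n : ℕ} (Δ : Set (Finset (Fin n))) (k : ℤ) :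
    Submodule ℝ (Finset (Fin n) →₀ ℝ) :=
  chains Δ k ⊓ LinearMap.ker bdry

/-- Simplicial `k`-boundaries of `Δ`. -/
noncomputable def bdries {n : ℕ} (Δ : Set (Finset (Fin n))) (k : ℤ) :
    Submodule ℝ (Finset (Fin n) →₀ ℝ) :=
  Submodule.map bdry (chains Δ (k + 1))

/-- The reduced Betti number `β̃_k(Δ)` (with real coefficients). -/
noncomputable def rBetti {n : ℕ} (Δ : Set (Finset (Fin n))) (k : ℤ) : ℕ :=
  Module.finrank ℝ ↥(cycles Δ k) - Module.finrank ℝ ↥(bdries Δ k)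

/-- The induced subcomplex `Δ_W` on a vertex set `W`. -/
def induced {n : ℕ} (Δ : Set (Finset (Fin n))) (W : Finset (Fin n)) : Set (Finset (Fin n)) :=
  {σ ∈ Δ | σ ⊆ W}

/-- The vertex set of the support of a simplicial chain. -/
def chainVerts {n : ℕ} (c : Finset (Fin n) →₀ ℝ) : Finset (Fin n) :=
  c.support.biUnion id

/-- `Δ` is resolution `k`-chordal: every `k`-cycle `z` admits a resolution, i.e. a
`(k+1)`-chain `c` with `∂c = z` and `c^(0) = z^(0)`. -/
def ResolutionChordal {n : ℕ} (Δ : Set (Finset (Fin n))) (k : ℤ) : Prop :=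
  ∀ z ∈ cycles Δ k, ∃ c ∈ chains Δ (k + 1), bdry c = z ∧ chainVerts c = chainVerts z

/-- `(Δ, ω)` is toric `k`-chordal: `ω : S_{k+1}(Δ) → S_k(Δ)` is surjective and
`ω : S_k(Δ) → S_{k−1}(Δ)` is injective. -/
def ToricChordal {n d : ℕ} (V : Fin n → Fin d → ℝ) (Δ : Set (Finset (Fin n)))
    (ω : Module.End ℝ (MvPolynomial (Fin n) ℝ)) (k : ℕ) : Prop :=
  (∀ γ ∈ stressK V Δ k, ∃ γ' ∈ stressK V Δ (k + 1), ω γ' = γ) ∧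
  (∀ γ ∈ stressK V Δ k, ω γ = 0 → γ = 0)

/-- `(Δ, ω)` is weakly toric `k`-chordal: `ω : S_k(St_v Δ) → S_{k−1}(St_v Δ)` is injective
for every vertex `v` of `Δ`. -/
def WeaklyToricChordal {n d : ℕ} (V : Fin n → Fin d → ℝ) (Δ : Set (Finset (Fin n)))
    (ω : Module.End ℝ (MvPolynomial (Fin n) ℝ)) (k : ℕ) : Prop :=
  ∀ v ∈ verts Δ, ∀ γ ∈ stressK V (vStar Δ v) k, ω γ = 0 → γ = 0

/-- A missing face of `Δ`: a nonface all of whose proper subsets are faces. -/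
def IsMissingFace {n : ℕ} (Δ : Set (Finset (Fin n))) (σ : Finset (Fin n)) : Prop :=
  σ ∉ Δ ∧ ∀ τ ⊂ σ, τ ∈ Δ

/-- Representatives of relative `k`-stresses of the relative complex `(Δ', Γ)`:
homogeneous degree-`k` elements of `S̃(Δ')` whose image under each coordinate differential
lies in `S̃(Γ)`.  The relative stress space `S_k(Δ', Γ)` is the quotient of this space by
(the degree-`k` part of) `S̃(Γ)`. -/
noncomputable def relStressK {n d : ℕ} (V : Fin n → Fin d → ℝ)
    (Δ' Γ : Set (Finset (Fin n))) (k : ℕ) : Submodule ℝ (MvPolynomial (Fin n) ℝ) :=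
  tStress Δ' ⊓ homogeneousSubmodule (Fin n) ℝ k ⊓
    ⨅ j : Fin d, (tStress Γ).comap (coordDiff V j)

/-- A shelling of a pure `(d−1)`-dimensional simplicial complex: a linear order on the facets
such that the intersection of each facet with the union of all subsequent facets is a pure
`(d−2)`-dimensional complex or empty. -/
def IsShelling {n : ℕ} (Δ : Set (Finset (Fin n))) (d : ℕ) (L : List (Finset (Fin n))) : Prop :=
  L.Nodup ∧ (∀ σ, σ ∈ L ↔ σ ∈ Δ ∧ σ.card = d) ∧
  (∀ σ ∈ Δ, ∃ F ∈ L, σ ⊆ F) ∧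
  ∀ (i : ℕ) (hi : i < L.length) (τ : Finset (Fin n)), τ ⊆ L.get ⟨i, hi⟩ →
    (∃ (j : ℕ) (hj : j < L.length), i < j ∧ τ ⊆ L.get ⟨j, hj⟩) →
    ∃ ρ, τ ⊆ ρ ∧ ρ ⊆ L.get ⟨i, hi⟩ ∧ ρ.card = d - 1 ∧
      ∃ (j : ℕ) (hj : j < L.length), i < j ∧ ρ ⊆ L.get ⟨j, hj⟩

/-- The degree-`k` graded piece of the stress space `S̃(Δ)`. -/
noncomputable def tStressK {n : ℕ} (Δ : Set (Finset (Fin n))) (k : ℕ) :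
    Submodule ℝ (MvPolynomial (Fin n) ℝ) :=
  tStress Δ ⊓ homogeneousSubmodule (Fin n) ℝ k

/-- A sequence `θ` of linear differentials is regular up to degree `k` on `S̃(Δ)`: each
`θ_j` maps the degree-`(i+1)` part of the common kernel of `θ_1, …, θ_{j−1}` in `S̃(Δ)` onto
the degree-`i` part, for every `i ≤ k`. -/
def RegularUpTo {n : ℕ} (Δ : Set (Finset (Fin n)))
    (θ : List (Module.End ℝ (MvPolynomial (Fin n) ℝ))) (k : ℕ) : Prop :=
  ∀ j < θ.length, ∀ i ≤ k,
    ∀ γ ∈ tStressK Δ i ⊓ ⨅ l ∈ Finset.range j, LinearMap.ker (θ.getD l 0),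
      ∃ γ' ∈ tStressK Δ (i + 1) ⊓ ⨅ l ∈ Finset.range j, LinearMap.ker (θ.getD l 0),
        θ.getD j 0 γ' = γ

/-- `dim Δ + 1`: the maximal cardinality of a face. -/
noncomputable def dim1 {n : ℕ} (Δ : Set (Finset (Fin n))) : ℕ :=
  sSup {m | ∃ σ ∈ Δ, σ.card = m}

/-- `Δ` is Cohen–Macaulay over `ℝ`: the reduced homology of every face link vanishes below
the expected dimension. -/
def IsCM {n : ℕ} (Δ : Set (Finset (Fin n))) : Prop :=
  ∀ σ ∈ Δ, ∀ i : ℤ, i < (dim1 Δ : ℤ) - 1 - σ.card →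
    cycles (lk Δ σ) i ≤ bdries (lk Δ σ) i

/-- `(q, T)` is a triangulation of the simplicial polytope `P = conv{p i}` whose faces contained
in the boundary `∂P` form exactly the boundary complex `Δ` of `P`. -/
def IsTriangulation {n d m : ℕ} (p : Fin n → Fin d → ℝ) (Δ : Set (Finset (Fin n)))
    (q : Fin m → Fin d → ℝ) (T : Set (Finset (Fin m))) : Prop :=
  IsComplex T ∧
  (∀ σ ∈ T, AffineIndependent ℝ (fun i : {x // x ∈ σ} => q i.1)) ∧
  (∀ σ ∈ T, ∀ τ ∈ T,
    convexHull ℝ (q '' ↑σ) ∩ convexHull ℝ (q '' ↑τ) = convexHull ℝ (q '' ↑(σ ∩ τ))) ∧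
  (⋃ σ ∈ T, convexHull ℝ (q '' ↑σ)) = convexHull ℝ (Set.range p) ∧
  {s : Set (Fin d → ℝ) | ∃ σ ∈ T,
      convexHull ℝ (q '' ↑σ) ⊆ frontier (convexHull ℝ (Set.range p)) ∧ s = q '' ↑σ}
    = {s : Set (Fin d → ℝ) | ∃ σ ∈ Δ, s = p '' ↑σ}

/-- The restriction `Δ_S` of a balanced complex to the set `S` of colors. -/
def colorRestrict {n d : ℕ} (Δ : Set (Finset (Fin n))) (col : Fin n → Fin d)
    (S : Finset (Fin d)) : Set (Finset (Fin n)) :=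
  {σ ∈ Δ | ∀ v ∈ σ, col v ∈ S}

lemma pd_apply {n : ℕ} (i : Fin n) (p : MvPolynomial (Fin n) ℝ) : pd i p = pderiv i p := rfl

lemma coeff_pd {n : ℕ} (i : Fin n) (b : Fin n →₀ ℕ) (p : MvPolynomial (Fin n) ℝ) :
    coeff b (pd i p) = ((b i : ℝ) + 1) * coeff (b + Finsupp.single i 1) p := by
  induction p using MvPolynomial.induction_on' with
  | add p q hp hq => simp [map_add, mul_add, ← pd_apply, hp, hq]
  | monomial a r =>
    rw [pd_apply, pderiv_monomial, coeff_monomial, coeff_monomial]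
    by_cases h : a = b + Finsupp.single i 1
    · subst h
      rw [if_pos (add_tsub_cancel_right _ _), if_pos rfl]
      simp [Finsupp.add_apply]
      ring
    · rw [if_neg h, mul_zero]
      by_cases hai : a i = 0
      · simp [hai]
      · rw [if_neg]
        intro hb
        apply h
        rw [← hb, tsub_add_cancel_of_le]
        exact Finsupp.single_le_iff.mpr (Nat.one_le_iff_ne_zero.mpr hai)

lemma pd_comm {n : ℕ} (i j : Fin n) (p : MvPolynomial (Fin n) ℝ) :
    pd i (pd j p) = pd j (pd i p) := by
  by_cases hij : i = j
  · subst hij; rfl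
  · apply MvPolynomial.ext
    intro b
    rw [coeff_pd, coeff_pd, coeff_pd, coeff_pd, add_right_comm]
    have h1 : ((b + Finsupp.single i 1 : Fin n →₀ ℕ) j) = b j := by
      simp [Finsupp.single_eq_of_ne' hij]
    have h2 : ((b + Finsupp.single j 1 : Fin n →₀ ℕ) i) = b i := by
      simp [Finsupp.single_eq_of_ne' (Ne.symm hij)]
    rw [h1, h2]; ring

lemma commute_pd {n : ℕ} (i j : Fin n) : Commute (pd i) (pd j) :=
  LinearMap.ext fun p => pd_comm i j p

lemma monDiff_zero {n : ℕ} : monDiff (0 : Fin n →₀ ℕ) = 1 := by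
  unfold monDiff
  rw [List.prod_eq_one]
  intro x hx
  simp only [List.mem_map] at hx
  obtain ⟨i, -, rfl⟩ := hx
  simp

lemma prod_map_add_single {n : ℕ} (a : Fin n →₀ ℕ) (v : Fin n) :
    ∀ L : List (Fin n), L.Nodup → v ∈ L →
      (L.map fun i => pd i ^ (a + Finsupp.single v 1 : Fin n →₀ ℕ) i).prod
        = pd v * (L.map fun i => pd i ^ a i).prod := by
  intro L
  induction L with
  | nil => simp
  | cons x t ih =>
    intro hnd hv
    simp only [List.map_cons, List.prod_cons]
    rcases List.mem_cons.mp hv with rfl | hvt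
    · have hvt : v ∉ t := (List.nodup_cons.mp hnd).1
      have h2 : (t.map fun i => pd i ^ (a + Finsupp.single v 1 : Fin n →₀ ℕ) i)
          = t.map fun i => pd i ^ a i := by
        apply List.map_congr_left
        intro i hi
        have : i ≠ v := fun h => hvt (h ▸ hi)
        rw [Finsupp.add_apply, Finsupp.single_eq_of_ne' (Ne.symm this), add_zero]
      rw [h2]
      have h1 : ((a + Finsupp.single v 1 : Fin n →₀ ℕ) v) = a v + 1 := by simp
      rw [h1, pow_succ', mul_assoc]
    · have hxv : x ≠ v := by
        rintro rfl; exact (List.nodup_cons.mp hnd).1 hvt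
      rw [ih (List.nodup_cons.mp hnd).2 hvt]
      have h1 : ((a + Finsupp.single v 1 : Fin n →₀ ℕ) x) = a x := by
        rw [Finsupp.add_apply, Finsupp.single_eq_of_ne' (Ne.symm hxv), add_zero]
      rw [h1, ← mul_assoc, ← mul_assoc, ((commute_pd v x).pow_right (a x)).eq]

lemma monDiff_add_single {n : ℕ} (a : Fin n →₀ ℕ) (v : Fin n) :
    monDiff (a + Finsupp.single v 1) = pd v * monDiff a :=
  prod_map_add_single a v (List.finRange n) (List.nodup_finRange n) (List.mem_finRange v)

lemma monDiff_single {n : ℕ} (v : Fin n) : monDiff (Finsupp.single v 1) = pd v := by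
  have := monDiff_add_single (0 : Fin n →₀ ℕ) v
  rwa [zero_add, monDiff_zero, mul_one] at this

lemma commute_pd_monDiff {n : ℕ} (v : Fin n) (a : Fin n →₀ ℕ) :
    Commute (pd v) (monDiff a) := by
  apply Commute.list_prod_right
  intro x hx
  simp only [List.mem_map] at hx
  obtain ⟨i, -, rfl⟩ := hx
  exact (commute_pd v i).pow_right _

lemma linDiff_pd_comm {n : ℕ} (c : Fin n → ℝ) (v : Fin n) (p : MvPolynomial (Fin n) ℝ) :
    linDiff c (pd v p) = pd v (linDiff c p) := by
  unfold linDiff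
  simp only [LinearMap.sum_apply, LinearMap.smul_apply, map_sum, map_smul]
  exact Finset.sum_congr rfl fun i _ => by rw [pd_comm]

lemma tStress_ann {n : ℕ} {Δ : Set (Finset (Fin n))} {γ : MvPolynomial (Fin n) ℝ}
    (hγ : γ ∈ tStress Δ) {a : Fin n →₀ ℕ} (ha : a.support ∉ Δ) : monDiff a γ = 0 := by
  have h1 := (Submodule.mem_iInf _).mp hγ a
  exact (Submodule.mem_iInf _).mp h1 ha

lemma mem_tStress_of {n : ℕ} {Δ : Set (Finset (Fin n))} {γ : MvPolynomial (Fin n) ℝ}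
    (hγ : ∀ a : Fin n →₀ ℕ, a.support ∉ Δ → monDiff a γ = 0) : γ ∈ tStress Δ := by
  refine (Submodule.mem_iInf _).mpr fun a => (Submodule.mem_iInf _).mpr fun ha => hγ a ha

lemma support_add_eq' {n : ℕ} (a b : Fin n →₀ ℕ) :
    (a + b).support = a.support ∪ b.support := by
  ext i
  simp only [Finset.mem_union, Finsupp.mem_support_iff, Finsupp.add_apply, ne_eq,
    Nat.add_eq_zero]
  tauto

lemma mem_stressVerts_iff {n : ℕ} (γ : MvPolynomial (Fin n) ℝ) (v : Fin n) :
    v ∈ stressVerts γ ↔ pd v γ ≠ 0 := by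
  constructor
  · intro hv h0
    rw [stressVerts, Finset.mem_biUnion] at hv
    obtain ⟨a, ha, hva⟩ := hv
    rw [Finsupp.mem_support_iff] at hva
    have hle : Finsupp.single v 1 ≤ a := Finsupp.single_le_iff.mpr
      (Nat.one_le_iff_ne_zero.mpr hva)
    have key : coeff (a - Finsupp.single v 1) (pd v γ) ≠ 0 := by
      rw [coeff_pd, tsub_add_cancel_of_le hle]
      exact mul_ne_zero (by positivity) (MvPolynomial.mem_support_iff.mp ha)
    rw [h0] at key
    simp at key
  · intro h0
    obtain ⟨b, hb⟩ := MvPolynomial.ne_zero_iff.mp h0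
    rw [coeff_pd] at hb
    have h2 : coeff (b + Finsupp.single v 1) γ ≠ 0 := fun h => hb (by rw [h, mul_zero])
    rw [stressVerts, Finset.mem_biUnion]
    refine ⟨b + Finsupp.single v 1, MvPolynomial.mem_support_iff.mpr h2, ?_⟩
    rw [Finsupp.mem_support_iff, Finsupp.add_apply, Finsupp.single_eq_same]
    omega

lemma isHomogeneous_pd {n : ℕ} {γ : MvPolynomial (Fin n) ℝ} {m : ℕ}
    (hγ : γ.IsHomogeneous (m + 1)) (v : Fin n) : (pd v γ).IsHomogeneous m := by
  intro b hb
  rw [coeff_pd] at hb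
  have h2 : coeff (b + Finsupp.single v 1) γ ≠ 0 := fun h => hb (by rw [h, mul_zero])
  have h3 := hγ h2
  rw [map_add] at h3
  have h4 : (Finsupp.weight 1) (Finsupp.single v 1) = 1 := by
    rw [Finsupp.weight_apply, Finsupp.sum_single_index] <;> simp
  rw [h4] at h3
  omega

lemma pd_mem_stressK {n d : ℕ} {V : Fin n → Fin d → ℝ} {Δ : Set (Finset (Fin n))}
    (hΔ : IsComplex Δ) {γ : MvPolynomial (Fin n) ℝ} {k : ℕ}
    (hγ : γ ∈ stressK V Δ (k + 1)) (v : Fin n) :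
    pd v γ ∈ stressK V (vStar Δ v) k := by
  obtain ⟨⟨ht, hker⟩, hhom⟩ := hγ
  refine ⟨⟨mem_tStress_of fun a ha => ?_, ?_⟩, ?_⟩
  · -- tStress (vStar Δ v)
    have hun : {v} ∪ a.support ∉ Δ := by
      intro hmem
      exact ha ⟨hΔ _ hmem _ Finset.subset_union_right, hmem⟩
    have hs : (a + Finsupp.single v 1).support ∉ Δ := by
      rw [support_add_eq', Finsupp.support_single_ne_zero v one_ne_zero, Finset.union_comm]
      exact hun
    have h0 := tStress_ann ht hs
    rw [monDiff_add_single, (commute_pd_monDiff v a).eq] at h0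
    calc monDiff a (pd v γ) = (monDiff a * pd v) γ := rfl
    _ = 0 := h0
  · -- coordDiff kernels
    refine (Submodule.mem_iInf _).mpr fun j => ?_
    have hj : coordDiff V j γ = 0 := (Submodule.mem_iInf _).mp hker j
    rw [LinearMap.mem_ker]
    show linDiff _ (pd v γ) = 0
    rw [linDiff_pd_comm]
    show pd v (coordDiff V j γ) = 0
    rw [hj, map_zero]
  · exact mem_homogeneousSubmodule _ _ |>.mpr (isHomogeneous_pd
      ((mem_homogeneousSubmodule _ _).mp hhom) v)

theorem stmt4 {n d : ℕ} (V : Fin n → Fin d → ℝ) (Δ : Set (Finset (Fin n)))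
    (hΔ : IsComplex Δ) (c : Fin n → ℝ) (k : ℕ)
    (h : WeaklyToricChordal V Δ (linDiff c) k) :
    (∀ γ ∈ stressK V Δ (k + 1), stressVerts (linDiff c γ) = stressVerts γ) ∧
    (∀ γ ∈ stressK V Δ (k + 1), linDiff c γ = 0 → γ = 0) := by
  have main : ∀ γ ∈ stressK V Δ (k + 1), stressVerts (linDiff c γ) = stressVerts γ := by
    intro γ hγ
    ext v
    rw [mem_stressVerts_iff, mem_stressVerts_iff, ← linDiff_pd_comm]
    constructor
    · intro h1 h2
      exact h1 (by rw [h2, map_zero])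
    · intro h1
      -- v is a vertex of Δ
      have hv : {v} ∈ Δ := by
        by_contra hvn
        have hs : (Finsupp.single v 1 : Fin n →₀ ℕ).support ∉ Δ := by
          rwa [Finsupp.support_single_ne_zero v one_ne_zero]
        have h2 := tStress_ann hγ.1.1 hs
        rw [monDiff_single] at h2
        exact h1 h2
      intro h2
      exact h1 (h v hv (pd v γ) (pd_mem_stressK hΔ hγ v) h2)
  refine ⟨main, fun γ hγ h0 => ?_⟩
  have hempty : stressVerts γ = ∅ := by
    rw [← main γ hγ, h0]
    simp [stressVerts]
  by_contra hne
  obtain ⟨a, ha⟩ := (MvPolynomial.support_nonempty.mpr hne)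
  have hahom := (mem_homogeneousSubmodule _ _).mp hγ.2 (MvPolynomial.mem_support_iff.mp ha)
  have hane : a ≠ 0 := by
    rintro rfl
    rw [map_zero] at hahom
    omega
  obtain ⟨v, hv⟩ := Finsupp.support_nonempty_iff.mpr hane
  have : v ∈ stressVerts γ := Finset.mem_biUnion.mpr ⟨a, ha, hv⟩
  rw [hempty] at this
  simp at this
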